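/- Let a ≥ 2 and let Z = Z_0(a-1, a+1; a-2, a+2) be the graph obtained from K_4 minus an edge by attaching pendant paths of lengths a+1 and a-1 at the two degree-3 vertices (of K_4 minus an edge) and pendant paths of lengths a+2 and a-2 at the two degree-2 vertices. Then Z is transmission irregular if and only if a is odd and a ≢ 1 (mod 3). -/

import Mathlib

/-- The transmission of a vertex: sum of distances to all other vertices. -/
noncomputable def transmission {V : Type*} [Fintype V] (G : SimpleGraph V) (v : V) : ℕ :=
  ∑ u : V, G.dist v u

/-- Arm lengths of `Z₀(a-1, a+1; a-2, a+2)`: paths of lengths `a+1`, `a-1` at the two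
degree-3 vertices (`0`, `1`) and `a+2`, `a-2` at the two degree-2 vertices (`2`, `3`). -/
def armLen (a : ℕ) : Fin 4 → ℕ := ![a + 1, a - 1, a + 2, a - 2]

/-- Vertex set: `Fin 4` is the core `K₄ - e` (edge `{2,3}` missing), and `⟨i, j⟩` is the
`(j+1)`-st vertex of the pendant path attached at core vertex `i`. -/
abbrev ZVert (a : ℕ) : Type := Fin 4 ⊕ (Σ i : Fin 4, Fin (armLen a i))

/-- The graph `Z₀(a-1, a+1; a-2, a+2)`: `K₄` minus the edge `{2,3}`, with a pendant path
of length `a+1` at vertex `0`, `a-1` at vertex `1` (the degree-3 vertices), and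
`a+2` at vertex `2`, `a-2` at vertex `3` (the degree-2 vertices). -/
def Zgraph (a : ℕ) : SimpleGraph (ZVert a) :=
  SimpleGraph.fromRel (fun x y =>
    match x, y with
    | Sum.inl c, Sum.inl c' => c ≠ c' ∧ ¬((c : ℕ) = 2 ∧ (c' : ℕ) = 3) ∧
        ¬((c : ℕ) = 3 ∧ (c' : ℕ) = 2)
    | Sum.inl c, Sum.inr q => c = q.1 ∧ (q.2 : ℕ) = 0
    | Sum.inr q, Sum.inr q' => q.1 = q'.1 ∧ (q'.2 : ℕ) = (q.2 : ℕ) + 1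
    | _, _ => False)


namespace ZAux

def Dc : Fin 4 → Fin 4 → ℕ := fun i k =>
  if i = k then 0 else if ((i:ℕ) = 2 ∧ (k:ℕ) = 3) ∨ ((i:ℕ) = 3 ∧ (k:ℕ) = 2) then 2 else 1

def cIx {a : ℕ} : ZVert a → Fin 4
  | Sum.inl c => c
  | Sum.inr q => q.1

def dep {a : ℕ} : ZVert a → ℕ
  | Sum.inl _ => 0
  | Sum.inr q => q.2 + 1

def dfun {a : ℕ} (v u : ZVert a) : ℕ :=
  if cIx v = cIx u then Nat.dist (dep v) (dep u)
  else dep v + dep u + Dc (cIx v) (cIx u)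

lemma vert_ext {a : ℕ} {v u : ZVert a} (hc : cIx v = cIx u) (hd : dep v = dep u) : v = u := by
  cases v with
  | inl c => cases u with
    | inl c' => simp [cIx] at hc; rw [hc]
    | inr q => simp [dep] at hd
  | inr q => cases u with
    | inl c' => simp [dep] at hd
    | inr q' =>
      obtain ⟨i, j⟩ := q; obtain ⟨i', j'⟩ := q'
      simp [cIx] at hc; subst hc
      simp [dep] at hd
      rw [Fin.ext hd]

lemma adj_inl_inl {a : ℕ} {c c' : Fin 4} :
    (Zgraph a).Adj (Sum.inl c) (Sum.inl c') ↔
    (c ≠ c' ∧ ¬((c : ℕ) = 2 ∧ (c' : ℕ) = 3) ∧ ¬((c : ℕ) = 3 ∧ (c' : ℕ) = 2)) := by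
  simp only [Zgraph, SimpleGraph.fromRel_adj, ne_eq, Sum.inl.injEq]
  constructor
  · rintro ⟨hne, h | h⟩
    · exact h
    · exact ⟨fun e => h.1 e.symm, fun ⟨e1, e2⟩ => h.2.2 ⟨e2, e1⟩, fun ⟨e1, e2⟩ => h.2.1 ⟨e2, e1⟩⟩
  · intro h
    exact ⟨h.1, Or.inl h⟩

lemma adj_inl_inr {a : ℕ} {c : Fin 4} {q : Σ i : Fin 4, Fin (armLen a i)} :
    (Zgraph a).Adj (Sum.inl c) (Sum.inr q) ↔ (c = q.1 ∧ (q.2 : ℕ) = 0) := by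
  simp only [Zgraph, SimpleGraph.fromRel_adj]
  constructor
  · rintro ⟨hne, h | h⟩
    · exact h
    · exact h.elim
  · intro h
    exact ⟨by simp, Or.inl h⟩

lemma adj_inr_inl {a : ℕ} {c : Fin 4} {q : Σ i : Fin 4, Fin (armLen a i)} :
    (Zgraph a).Adj (Sum.inr q) (Sum.inl c) ↔ (c = q.1 ∧ (q.2 : ℕ) = 0) := by
  rw [SimpleGraph.adj_comm]; exact adj_inl_inr

lemma adj_inr_inr {a : ℕ} {q q' : Σ i : Fin 4, Fin (armLen a i)} :
    (Zgraph a).Adj (Sum.inr q) (Sum.inr q') ↔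
    (q.1 = q'.1 ∧ ((q'.2 : ℕ) = (q.2 : ℕ) + 1 ∨ (q.2 : ℕ) = (q'.2 : ℕ) + 1)) := by
  simp only [Zgraph, SimpleGraph.fromRel_adj, ne_eq, Sum.inr.injEq]
  constructor
  · rintro ⟨hne, h | h⟩
    · exact ⟨h.1, Or.inl h.2⟩
    · exact ⟨h.1.symm, Or.inr h.2⟩
  · rintro ⟨h1, h2 | h2⟩
    · refine ⟨?_, Or.inl ⟨h1, h2⟩⟩
      intro he; rw [he] at h2; omega
    · refine ⟨?_, Or.inr ⟨h1.symm, h2⟩⟩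
      intro he; rw [he] at h2; omega


lemma Dc_self (i : Fin 4) : Dc i i = 0 := by simp [Dc]
lemma Dc_symm : ∀ i k : Fin 4, Dc i k = Dc k i := by decide
lemma Dc_pos : ∀ i k : Fin 4, i ≠ k → 1 ≤ Dc i k := by decide
lemma Dc_le2 : ∀ i k : Fin 4, Dc i k ≤ 2 := by decide
lemma Dc_tri : ∀ i c c' : Fin 4, Dc c c' = 1 → Dc i c ≤ Dc i c' + 1 := by decide
lemma Dc_one : ∀ c c' : Fin 4, c ≠ c' → ¬((c:ℕ)=2 ∧ (c':ℕ)=3) → ¬((c:ℕ)=3 ∧ (c':ℕ)=2) →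
    Dc c c' = 1 := by decide
lemma Dc_one' : ∀ c c' : Fin 4, Dc c c' = 1 →
    (c ≠ c' ∧ ¬((c:ℕ)=2 ∧ (c':ℕ)=3) ∧ ¬((c:ℕ)=3 ∧ (c':ℕ)=2)) := by decide
lemma Dc_two : ∀ i k : Fin 4, Dc i k = 2 → (i ≠ 0 ∧ k ≠ 0 ∧ Dc i 0 = 1 ∧ Dc 0 k = 1) := by decide
lemma Dc_cases : ∀ i k : Fin 4, i ≠ k → Dc i k = 1 ∨ Dc i k = 2 := by decide

lemma dist_unfold (x y : ℕ) : Nat.dist x y = x - y + (y - x) := rfl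

@[simp] lemma cIx_inl {a : ℕ} (c : Fin 4) : cIx (a := a) (Sum.inl c) = c := Eq.trans rfl rfl
@[simp] lemma cIx_inr {a : ℕ} (q : Σ i : Fin 4, Fin (armLen a i)) :
    cIx (Sum.inr q) = q.1 := Eq.trans rfl rfl
@[simp] lemma dep_inl {a : ℕ} (c : Fin 4) : dep (a := a) (Sum.inl c) = 0 := Eq.trans rfl rfl
@[simp] lemma dep_inr {a : ℕ} (q : Σ i : Fin 4, Fin (armLen a i)) :
    dep (Sum.inr q) = (q.2 : ℕ) + 1 := Eq.trans rfl rfl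

lemma dfun_def {a : ℕ} (v u : ZVert a) : dfun v u =
    if cIx v = cIx u then Nat.dist (dep v) (dep u)
    else dep v + dep u + Dc (cIx v) (cIx u) := rfl

lemma dfun_self {a : ℕ} (v : ZVert a) : dfun v v = 0 := by
  simp [dfun_def, Nat.dist_self]

lemma dfun_eq_zero {a : ℕ} {v u : ZVert a} (h : dfun v u = 0) : v = u := by
  rw [dfun_def] at h
  split at h
  · next hc => exact vert_ext hc (by rw [dist_unfold] at h; omega)
  · next hc =>
    exfalso
    have := Dc_pos (cIx v) (cIx u) (by intro e; exact hc e)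
    omega

/-- Step-down lemma: if `dfun v u > 0` there is a neighbour of `u` strictly closer to `v`. -/
lemma dfun_step {a : ℕ} (v u : ZVert a) (h : 0 < dfun v u) :
    ∃ w : ZVert a, (Zgraph a).Adj w u ∧ dfun v w + 1 = dfun v u := by
  cases u with
  | inl k =>
    by_cases hc : cIx v = k
    · -- v is on arm k at positive depth
      cases v with
      | inl c =>
        exfalso
        rw [dfun_def] at h
        simp only [cIx_inl, dep_inl] at h hc
        rw [if_pos hc] at h
        simp [Nat.dist_self] at h
      | inr q =>
        obtain ⟨i, x⟩ := q
        simp only [cIx_inr] at hc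
        subst hc
        refine ⟨Sum.inr ⟨i, ⟨0, x.pos⟩⟩, ?_, ?_⟩
        · rw [adj_inr_inl]; exact ⟨rfl, rfl⟩
        · rw [dfun_def, dfun_def]
          simp only [cIx_inr, cIx_inl, dep_inr, dep_inl, ite_true]
          simp only [dist_unfold]
          omega
    · -- v on another arm; u is core k
      rcases Dc_cases (cIx v) k hc with h1 | h2
      · refine ⟨Sum.inl (cIx v), ?_, ?_⟩
        · obtain ⟨hne, h23, h32⟩ := Dc_one' _ _ h1
          rw [adj_inl_inl]; exact ⟨hne, h23, h32⟩
        · rw [dfun_def, dfun_def]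
          simp only [cIx_inl, dep_inl, ite_true]
          rw [if_neg hc, h1, Nat.dist_zero_right]
      · obtain ⟨hv0, hk0, hv1, h0k⟩ := Dc_two _ _ h2
        refine ⟨Sum.inl 0, ?_, ?_⟩
        · obtain ⟨hne, h23, h32⟩ := Dc_one' _ _ h0k
          rw [adj_inl_inl]; exact ⟨hne, h23, h32⟩
        · rw [dfun_def, dfun_def]
          simp only [cIx_inl, dep_inl, ite_true]
          rw [if_neg hv0, if_neg hc, hv1, h2]
  | inr q =>
    obtain ⟨k, j⟩ := q
    by_cases hc : cIx v = k
    · -- same arm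
      by_cases hgt : (j : ℕ) + 1 < dep v
      · -- v deeper: step up to depth j+2
        cases v with
        | inl c => simp only [dep_inl] at hgt; omega
        | inr q' =>
          obtain ⟨k', x⟩ := q'
          simp only [cIx_inr] at hc
          subst hc
          simp only [dep_inr] at hgt
          have hlt : (j : ℕ) + 1 < armLen a k' := by
            have := x.isLt; omega
          refine ⟨Sum.inr ⟨k', ⟨(j : ℕ) + 1, hlt⟩⟩, ?_, ?_⟩
          · rw [adj_inr_inr]; exact ⟨rfl, Or.inr rfl⟩
          · rw [dfun_def, dfun_def]
            simp only [cIx_inr, dep_inr, ite_true]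
            simp only [dist_unfold]
            omega
      · -- v shallower: step down to depth j
        have hne : dep v ≠ (j : ℕ) + 1 := by
          intro e
          have : v = Sum.inr ⟨k, j⟩ := vert_ext (by simpa using hc) (by simpa using e)
          rw [this, dfun_self] at h; omega
        have hle : dep v < (j : ℕ) + 1 := by omega
        rcases Nat.eq_zero_or_pos (j : ℕ) with hj0 | hjpos
        · refine ⟨Sum.inl k, ?_, ?_⟩
          · rw [adj_inl_inr]; exact ⟨rfl, hj0⟩
          · rw [dfun_def, dfun_def]
            simp only [cIx_inl, cIx_inr, dep_inl, dep_inr]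
            rw [if_pos hc, if_pos hc]
            simp only [dist_unfold]
            omega
        · have hlt : (j : ℕ) - 1 < armLen a k := by
            have := j.isLt; omega
          refine ⟨Sum.inr ⟨k, ⟨(j : ℕ) - 1, hlt⟩⟩, ?_, ?_⟩
          · rw [adj_inr_inr]
            refine ⟨rfl, Or.inl ?_⟩
            simp only []
            omega
          · rw [dfun_def, dfun_def]
            simp only [cIx_inr, dep_inr]
            rw [if_pos hc, if_pos hc]
            simp only [dist_unfold]
            omega
    · -- different arm: step down along arm k
      rcases Nat.eq_zero_or_pos (j : ℕ) with hj0 | hjpos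
      · refine ⟨Sum.inl k, ?_, ?_⟩
        · rw [adj_inl_inr]; exact ⟨rfl, hj0⟩
        · rw [dfun_def, dfun_def]
          simp only [cIx_inl, cIx_inr, dep_inl, dep_inr]
          rw [if_neg hc, if_neg hc]
          omega
      · have hlt : (j : ℕ) - 1 < armLen a k := by
          have := j.isLt; omega
        refine ⟨Sum.inr ⟨k, ⟨(j : ℕ) - 1, hlt⟩⟩, ?_, ?_⟩
        · rw [adj_inr_inr]
          refine ⟨rfl, Or.inl ?_⟩
          simp only []
          omega
        · rw [dfun_def, dfun_def]
          simp only [cIx_inr, dep_inr]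
          rw [if_neg hc, if_neg hc]
          omega

/-- Lipschitz property of `dfun` along edges. -/
lemma dfun_adj {a : ℕ} (v u w : ZVert a) (h : (Zgraph a).Adj u w) :
    dfun v u ≤ dfun v w + 1 := by
  cases u with
  | inl c =>
    cases w with
    | inl c' =>
      rw [adj_inl_inl] at h
      obtain ⟨hne, h23, h32⟩ := h
      have h1 : Dc c c' = 1 := Dc_one c c' hne h23 h32
      have h1' : Dc c' c = 1 := by rw [Dc_symm] at h1; exact h1
      rw [dfun_def, dfun_def]
      simp only [cIx_inl, dep_inl]
      by_cases hcc : cIx v = c <;> by_cases hcc' : cIx v = c'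
      · exact absurd (hcc ▸ hcc') hne
      · rw [if_pos hcc, if_neg hcc']
        simp only [dist_unfold]; omega
      · rw [if_neg hcc, if_pos hcc']
        have : Dc (cIx v) c = 1 := hcc' ▸ h1'
        rw [this]
        simp only [dist_unfold]; omega
      · rw [if_neg hcc, if_neg hcc']
        have := Dc_tri (cIx v) c c' h1
        omega
    | inr q' =>
      rw [adj_inl_inr] at h
      obtain ⟨hq, _⟩ := h
      rw [dfun_def, dfun_def]
      simp only [cIx_inl, cIx_inr, dep_inl, dep_inr, ← hq]
      by_cases hcc : cIx v = c
      · rw [if_pos hcc, if_pos hcc]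
        simp only [dist_unfold]; omega
      · rw [if_neg hcc, if_neg hcc]
        omega
  | inr q =>
    cases w with
    | inl c' =>
      rw [adj_inr_inl] at h
      obtain ⟨hq, _⟩ := h
      rw [dfun_def, dfun_def]
      simp only [cIx_inl, cIx_inr, dep_inl, dep_inr, ← hq]
      by_cases hcc : cIx v = c'
      · rw [if_pos hcc, if_pos hcc]
        simp only [dist_unfold]; omega
      · rw [if_neg hcc, if_neg hcc]
        omega
    | inr q' =>
      rw [adj_inr_inr] at h
      obtain ⟨hq, hj⟩ := h
      rw [dfun_def, dfun_def]
      simp only [cIx_inr, dep_inr, ← hq]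
      by_cases hcc : cIx v = q.1
      · rw [if_pos hcc, if_pos hcc]
        simp only [dist_unfold]; omega
      · rw [if_neg hcc, if_neg hcc]
        omega

lemma exists_walk {a : ℕ} (v : ZVert a) :
    ∀ (n : ℕ) (u : ZVert a), dfun v u = n → ∃ p : (Zgraph a).Walk v u, p.length = n := by
  intro n
  induction n with
  | zero =>
    intro u h
    obtain rfl := dfun_eq_zero h
    exact ⟨SimpleGraph.Walk.nil, rfl⟩
  | succ n ih =>
    intro u h
    obtain ⟨w, hadj, hw⟩ := dfun_step v u (by omega)
    obtain ⟨p, hp⟩ := ih w (by omega)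
    exact ⟨p.concat hadj, by rw [SimpleGraph.Walk.length_concat, hp]⟩

lemma dfun_le_length {a : ℕ} (v : ZVert a) {w u : ZVert a} (p : (Zgraph a).Walk w u) :
    dfun v u ≤ dfun v w + p.length := by
  induction p with
  | nil => simp
  | cons h q ih =>
    have hstep := dfun_adj v _ _ h.symm
    simp only [SimpleGraph.Walk.length_cons]
    omega

theorem dist_eq_dfun {a : ℕ} (v u : ZVert a) : (Zgraph a).dist v u = dfun v u := by
  obtain ⟨p, hp⟩ := exists_walk v (dfun v u) u rfl
  refine le_antisymm (hp ▸ SimpleGraph.dist_le p) ?_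
  obtain ⟨q, hq⟩ := SimpleGraph.Reachable.exists_walk_length_eq_dist ⟨p⟩
  have := dfun_le_length v q
  rw [dfun_self] at this
  omega


lemma gauss_base (x : ℕ) : 2 * (∑ j ∈ Finset.range x, Nat.dist x (j+1)) + x = x*x := by
  have hs : (∑ j ∈ Finset.range x, Nat.dist x (j+1)) = ∑ j ∈ Finset.range x, (x - 1 - j) := by
    refine Finset.sum_congr rfl fun j hj => ?_
    rw [Finset.mem_range] at hj
    rw [dist_unfold]; omega
  rw [hs, Finset.sum_range_reflect (fun j => j) x]
  have h2 := Finset.sum_range_id_mul_two x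
  rcases x with _ | m
  · simp
  · have hr : (m+1)*(m+1) = (m+1)*m + (m+1) := by ring
    have h3 : (m + 1) - 1 = m := rfl
    rw [h3] at h2
    linarith [h2, hr]

lemma sumdist (x d : ℕ) :
    2 * (∑ j ∈ Finset.range (x+d), Nat.dist x (j+1)) + x = x*x + d*d + d := by
  induction d with
  | zero => simpa using gauss_base x
  | succ d ih =>
    rw [show x + (d+1) = (x+d) + 1 by omega, Finset.sum_range_succ]
    have hd : Nat.dist x (x+d+1) = d+1 := by rw [dist_unfold]; omega
    rw [hd]
    have hr : (d+1)*(d+1) = d*d + 2*d + 1 := by ring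
    linarith [ih, hr]

lemma sumdist2 (x L : ℕ) (h : x ≤ L) :
    2 * (∑ j ∈ Finset.range L, Nat.dist x (j+1)) + 2*(L+1)*x = 2*(x*x) + L*L + L := by
  obtain ⟨d, rfl⟩ : ∃ d, L = x + d := ⟨L - x, by omega⟩
  have hs := sumdist x d
  have key : 2*((x+d+1)*x) + (d*d + d) = x + (x*x + (x+d)*(x+d) + (x+d)) := by ring
  linarith [hs, key]

lemma sumlin (L c : ℕ) : 2 * (∑ j ∈ Finset.range L, (c + (j+1))) = 2*L*c + L*(L+1) := by
  induction L with
  | zero => simp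
  | succ L ih =>
    rw [Finset.sum_range_succ]
    have key : 2*(L+1)*c + (L+1)*(L+2) = 2*L*c + L*(L+1) + 2*(c + (L+1)) := by ring
    linarith [ih, key]


lemma dep_le {a : ℕ} (v : ZVert a) : dep v ≤ armLen a (cIx v) := by
  cases v with
  | inl c => exact Nat.zero_le _
  | inr q => exact q.2.isLt

lemma dfun_inl {a : ℕ} (v : ZVert a) (k : Fin 4) :
    dfun v (Sum.inl k) = dep v + Dc (cIx v) k := by
  rw [dfun_def]
  simp only [cIx_inl, dep_inl]
  split_ifs with h
  · rw [h, Dc_self, Nat.dist_zero_right]; omega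
  · rfl

lemma arm_ne_sum {a : ℕ} (v : ZVert a) (k : Fin 4) (h : cIx v ≠ k) (L : ℕ)
    (hL : armLen a k = L) :
    2 * (∑ j : Fin (armLen a k), dfun v (Sum.inr ⟨k, j⟩)) =
      2*L*(dep v + Dc (cIx v) k) + L*(L+1) := by
  have hterm : ∀ j : Fin (armLen a k),
      dfun v (Sum.inr ⟨k, j⟩) = (dep v + Dc (cIx v) k) + ((j : ℕ) + 1) := by
    intro j
    rw [dfun_def]
    simp only [cIx_inr, dep_inr]
    rw [if_neg h]
    omega
  simp only [hterm]
  rw [Fin.sum_univ_eq_sum_range (fun m => (dep v + Dc (cIx v) k) + (m + 1)) (armLen a k), hL]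
  exact sumlin L (dep v + Dc (cIx v) k)

lemma arm_eq_sum {a : ℕ} (v : ZVert a) (k : Fin 4) (h : cIx v = k) (L : ℕ)
    (hL : armLen a k = L) :
    2 * (∑ j : Fin (armLen a k), dfun v (Sum.inr ⟨k, j⟩)) + 2*(L+1)*(dep v) =
      2*(dep v * dep v) + L*L + L := by
  have hterm : ∀ j : Fin (armLen a k),
      dfun v (Sum.inr ⟨k, j⟩) = Nat.dist (dep v) ((j : ℕ) + 1) := by
    intro j
    rw [dfun_def]
    simp only [cIx_inr, dep_inr]
    rw [if_pos h]
  simp only [hterm]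
  rw [Fin.sum_univ_eq_sum_range (fun m => Nat.dist (dep v) (m + 1)) (armLen a k), hL]
  have hx : dep v ≤ L := by
    rw [← hL, ← h]
    exact dep_le v
  exact sumdist2 (dep v) L hx

def T2 (b : ℕ) (i : Fin 4) (x : ℕ) : ℕ :=
  2*(x*x) + (![4*b+10, 4*b+18, 4*b+6, 4*b+22] i) * x +
    (![4*b*b+26*b+50, 4*b*b+26*b+54, 4*b*b+28*b+50, 4*b*b+28*b+66] i)



lemma armLen0 (b : ℕ) : armLen (b+2) 0 = b+3 := rfl
lemma armLen1 (b : ℕ) : armLen (b+2) 1 = b+1 := rfl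
lemma armLen2 (b : ℕ) : armLen (b+2) 2 = b+4 := rfl
lemma armLen3 (b : ℕ) : armLen (b+2) 3 = b := rfl


lemma assemble0 (b : ℕ) (v : ZVert (b+2)) (hi : cIx v = 0) :
    2 * (∑ u : ZVert (b+2), dfun v u) = T2 b 0 (dep v) := by
  have hd0 : Dc (cIx v) 0 = 0 := by rw [hi]; decide
  have hd1 : Dc (cIx v) 1 = 1 := by rw [hi]; decide
  have hd2 : Dc (cIx v) 2 = 1 := by rw [hi]; decide
  have hd3 : Dc (cIx v) 3 = 1 := by rw [hi]; decide
  have hne1 : cIx v ≠ 1 := by rw [hi]; decide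
  have hne2 : cIx v ≠ 2 := by rw [hi]; decide
  have hne3 : cIx v ≠ 3 := by rw [hi]; decide
  have h0 := arm_eq_sum v 0 hi (b+3) (armLen0 b)
  have h1 := arm_ne_sum v 1 hne1 (b+1) (armLen1 b)
  rw [hd1] at h1
  have h2 := arm_ne_sum v 2 hne2 (b+4) (armLen2 b)
  rw [hd2] at h2
  have h3 := arm_ne_sum v 3 hne3 (b) (armLen3 b)
  rw [hd3] at h3
  have hcore : dfun v (Sum.inl 0) + dfun v (Sum.inl 1) + dfun v (Sum.inl 2) + dfun v (Sum.inl 3)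
      = 4 * dep v + 3 := by
    rw [dfun_inl, dfun_inl, dfun_inl, dfun_inl, hd0, hd1, hd2, hd3]; omega
  rw [Fintype.sum_sum_type, ← Finset.univ_sigma_univ, Finset.sum_sigma,
    Fin.sum_univ_four, Fin.sum_univ_four]
  rw [show T2 b 0 (dep v) = 2*(dep v * dep v) + (4*b+10)*(dep v) + (4*b*b+26*b+50) from rfl]
  zify at h0 h1 h2 h3 hcore ⊢
  linear_combination 2 * hcore + h0 + h1 + h2 + h3


lemma assemble1 (b : ℕ) (v : ZVert (b+2)) (hi : cIx v = 1) :
    2 * (∑ u : ZVert (b+2), dfun v u) = T2 b 1 (dep v) := by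
  have hd0 : Dc (cIx v) 0 = 1 := by rw [hi]; decide
  have hd1 : Dc (cIx v) 1 = 0 := by rw [hi]; decide
  have hd2 : Dc (cIx v) 2 = 1 := by rw [hi]; decide
  have hd3 : Dc (cIx v) 3 = 1 := by rw [hi]; decide
  have hne0 : cIx v ≠ 0 := by rw [hi]; decide
  have hne2 : cIx v ≠ 2 := by rw [hi]; decide
  have hne3 : cIx v ≠ 3 := by rw [hi]; decide
  have h0 := arm_ne_sum v 0 hne0 (b+3) (armLen0 b)
  rw [hd0] at h0
  have h1 := arm_eq_sum v 1 hi (b+1) (armLen1 b)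
  have h2 := arm_ne_sum v 2 hne2 (b+4) (armLen2 b)
  rw [hd2] at h2
  have h3 := arm_ne_sum v 3 hne3 (b) (armLen3 b)
  rw [hd3] at h3
  have hcore : dfun v (Sum.inl 0) + dfun v (Sum.inl 1) + dfun v (Sum.inl 2) + dfun v (Sum.inl 3)
      = 4 * dep v + 3 := by
    rw [dfun_inl, dfun_inl, dfun_inl, dfun_inl, hd0, hd1, hd2, hd3]; omega
  rw [Fintype.sum_sum_type, ← Finset.univ_sigma_univ, Finset.sum_sigma,
    Fin.sum_univ_four, Fin.sum_univ_four]
  rw [show T2 b 1 (dep v) = 2*(dep v * dep v) + (4*b+18)*(dep v) + (4*b*b+26*b+54) from rfl]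
  zify at h0 h1 h2 h3 hcore ⊢
  linear_combination 2 * hcore + h0 + h1 + h2 + h3


lemma assemble2 (b : ℕ) (v : ZVert (b+2)) (hi : cIx v = 2) :
    2 * (∑ u : ZVert (b+2), dfun v u) = T2 b 2 (dep v) := by
  have hd0 : Dc (cIx v) 0 = 1 := by rw [hi]; decide
  have hd1 : Dc (cIx v) 1 = 1 := by rw [hi]; decide
  have hd2 : Dc (cIx v) 2 = 0 := by rw [hi]; decide
  have hd3 : Dc (cIx v) 3 = 2 := by rw [hi]; decide
  have hne0 : cIx v ≠ 0 := by rw [hi]; decide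
  have hne1 : cIx v ≠ 1 := by rw [hi]; decide
  have hne3 : cIx v ≠ 3 := by rw [hi]; decide
  have h0 := arm_ne_sum v 0 hne0 (b+3) (armLen0 b)
  rw [hd0] at h0
  have h1 := arm_ne_sum v 1 hne1 (b+1) (armLen1 b)
  rw [hd1] at h1
  have h2 := arm_eq_sum v 2 hi (b+4) (armLen2 b)
  have h3 := arm_ne_sum v 3 hne3 (b) (armLen3 b)
  rw [hd3] at h3
  have hcore : dfun v (Sum.inl 0) + dfun v (Sum.inl 1) + dfun v (Sum.inl 2) + dfun v (Sum.inl 3)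
      = 4 * dep v + 4 := by
    rw [dfun_inl, dfun_inl, dfun_inl, dfun_inl, hd0, hd1, hd2, hd3]; omega
  rw [Fintype.sum_sum_type, ← Finset.univ_sigma_univ, Finset.sum_sigma,
    Fin.sum_univ_four, Fin.sum_univ_four]
  rw [show T2 b 2 (dep v) = 2*(dep v * dep v) + (4*b+6)*(dep v) + (4*b*b+28*b+50) from rfl]
  zify at h0 h1 h2 h3 hcore ⊢
  linear_combination 2 * hcore + h0 + h1 + h2 + h3


lemma assemble3 (b : ℕ) (v : ZVert (b+2)) (hi : cIx v = 3) :
    2 * (∑ u : ZVert (b+2), dfun v u) = T2 b 3 (dep v) := by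
  have hd0 : Dc (cIx v) 0 = 1 := by rw [hi]; decide
  have hd1 : Dc (cIx v) 1 = 1 := by rw [hi]; decide
  have hd2 : Dc (cIx v) 2 = 2 := by rw [hi]; decide
  have hd3 : Dc (cIx v) 3 = 0 := by rw [hi]; decide
  have hne0 : cIx v ≠ 0 := by rw [hi]; decide
  have hne1 : cIx v ≠ 1 := by rw [hi]; decide
  have hne2 : cIx v ≠ 2 := by rw [hi]; decide
  have h0 := arm_ne_sum v 0 hne0 (b+3) (armLen0 b)
  rw [hd0] at h0
  have h1 := arm_ne_sum v 1 hne1 (b+1) (armLen1 b)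
  rw [hd1] at h1
  have h2 := arm_ne_sum v 2 hne2 (b+4) (armLen2 b)
  rw [hd2] at h2
  have h3 := arm_eq_sum v 3 hi (b) (armLen3 b)
  have hcore : dfun v (Sum.inl 0) + dfun v (Sum.inl 1) + dfun v (Sum.inl 2) + dfun v (Sum.inl 3)
      = 4 * dep v + 4 := by
    rw [dfun_inl, dfun_inl, dfun_inl, dfun_inl, hd0, hd1, hd2, hd3]; omega
  rw [Fintype.sum_sum_type, ← Finset.univ_sigma_univ, Finset.sum_sigma,
    Fin.sum_univ_four, Fin.sum_univ_four]
  rw [show T2 b 3 (dep v) = 2*(dep v * dep v) + (4*b+22)*(dep v) + (4*b*b+28*b+66) from rfl]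
  zify at h0 h1 h2 h3 hcore ⊢
  linear_combination 2 * hcore + h0 + h1 + h2 + h3


lemma two_transmission (b : ℕ) (v : ZVert (b+2)) :
    2 * transmission (Zgraph (b+2)) v = T2 b (cIx v) (dep v) := by
  have hts : transmission (Zgraph (b+2)) v = ∑ u : ZVert (b+2), dfun v u :=
    Finset.sum_congr rfl fun u _ => dist_eq_dfun v u
  rw [hts]
  have h4 : ∀ i : Fin 4, i = 0 ∨ i = 1 ∨ i = 2 ∨ i = 3 := by decide
  rcases h4 (cIx v) with hi | hi | hi | hi <;> rw [hi]
  · exact assemble0 b v hi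
  · exact assemble1 b v hi
  · exact assemble2 b v hi
  · exact assemble3 b v hi


lemma same0 (b x y : ℕ) (h : T2 b 0 x = T2 b 0 y) : x = y := by
  rw [show T2 b 0 x = 2*(x*x) + (4*b+10)*x + (4*b*b+26*b+50) from rfl,
      show T2 b 0 y = 2*(y*y) + (4*b+10)*y + (4*b*b+26*b+50) from rfl] at h
  zify at h
  have key : ((x:ℤ) - y) * (2*((x:ℤ) + y) + (4*(b:ℤ) + 10)) = 0 := by
    linear_combination h
  rcases mul_eq_zero.mp key with h0 | h0 <;> omega


lemma same1 (b x y : ℕ) (h : T2 b 1 x = T2 b 1 y) : x = y := by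
  rw [show T2 b 1 x = 2*(x*x) + (4*b+18)*x + (4*b*b+26*b+54) from rfl,
      show T2 b 1 y = 2*(y*y) + (4*b+18)*y + (4*b*b+26*b+54) from rfl] at h
  zify at h
  have key : ((x:ℤ) - y) * (2*((x:ℤ) + y) + (4*(b:ℤ) + 18)) = 0 := by
    linear_combination h
  rcases mul_eq_zero.mp key with h0 | h0 <;> omega


lemma same2 (b x y : ℕ) (h : T2 b 2 x = T2 b 2 y) : x = y := by
  rw [show T2 b 2 x = 2*(x*x) + (4*b+6)*x + (4*b*b+28*b+50) from rfl,
      show T2 b 2 y = 2*(y*y) + (4*b+6)*y + (4*b*b+28*b+50) from rfl] at h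
  zify at h
  have key : ((x:ℤ) - y) * (2*((x:ℤ) + y) + (4*(b:ℤ) + 6)) = 0 := by
    linear_combination h
  rcases mul_eq_zero.mp key with h0 | h0 <;> omega


lemma same3 (b x y : ℕ) (h : T2 b 3 x = T2 b 3 y) : x = y := by
  rw [show T2 b 3 x = 2*(x*x) + (4*b+22)*x + (4*b*b+28*b+66) from rfl,
      show T2 b 3 y = 2*(y*y) + (4*b+22)*y + (4*b*b+28*b+66) from rfl] at h
  zify at h
  have key : ((x:ℤ) - y) * (2*((x:ℤ) + y) + (4*(b:ℤ) + 22)) = 0 := by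
    linear_combination h
  rcases mul_eq_zero.mp key with h0 | h0 <;> omega


lemma pair02 (b x y : ℕ) (hb : b % 2 = 1) (h3 : b % 3 ≠ 2)
    (hx : x ≤ b+3) (hy : y ≤ b+4) (h : T2 b 0 x = T2 b 2 y) : False := by
  rw [show T2 b 0 x = 2*(x*x) + (4*b+10)*x + (4*b*b+26*b+50) from rfl,
      show T2 b 2 y = 2*(y*y) + (4*b+6)*y + (4*b*b+28*b+50) from rfl] at h
  zify at h
  have key2 : ((x:ℤ) - y + 1) * ((x:ℤ) + y + 2*b + 4) * 2 = (3*(b:ℤ) + 4) * 2 := by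
    linear_combination h
  have key : ((x:ℤ) - y + 1) * ((x:ℤ) + y + 2*b + 4) = 3*(b:ℤ) + 4 :=
    mul_right_cancel₀ (by norm_num) key2
  have hQ : (0:ℤ) < (x:ℤ) + y + 2*b + 4 := by omega
  rcases show (x:ℤ) - y + 1 ≤ 0 ∨ (x:ℤ) - y + 1 = 1 ∨ 2 ≤ (x:ℤ) - y + 1 by omega with hp | hp | hp
  · have hP0 : ((x:ℤ) - y + 1) * ((x:ℤ) + y + 2*b + 4) ≤ 0 :=
      mul_nonpos_iff.mpr (Or.inr ⟨hp, hQ.le⟩)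
    linarith [key, hP0, Int.natCast_nonneg b]
  · rw [hp] at key
    omega
  · have hm := mul_le_mul_of_nonneg_right hp hQ.le
    linarith [key, hm, Int.natCast_nonneg x, Int.natCast_nonneg y, Int.natCast_nonneg b]


lemma pair01 (b x y : ℕ) (hb : b % 2 = 1) (h3 : b % 3 ≠ 2)
    (hx : x ≤ b+3) (hy : y ≤ b+1) (h : T2 b 0 x = T2 b 1 y) : False := by
  rw [show T2 b 0 x = 2*(x*x) + (4*b+10)*x + (4*b*b+26*b+50) from rfl,
      show T2 b 1 y = 2*(y*y) + (4*b+18)*y + (4*b*b+26*b+54) from rfl] at h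
  zify at h
  have key2 : ((y:ℤ) - x + 2) * ((x:ℤ) + y + 2*b + 7) * 2 = (4*(b:ℤ) + 12) * 2 := by
    linear_combination -h
  have key : ((y:ℤ) - x + 2) * ((x:ℤ) + y + 2*b + 7) = 4*(b:ℤ) + 12 :=
    mul_right_cancel₀ (by norm_num) key2
  have hQ : (0:ℤ) < (x:ℤ) + y + 2*b + 7 := by omega
  rcases show (y:ℤ) - x + 2 ≤ 0 ∨ (y:ℤ) - x + 2 = 1 ∨ (y:ℤ) - x + 2 = 2 ∨ 3 ≤ (y:ℤ) - x + 2 by omega with hp | hp | hp | hp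
  · have hP0 : ((y:ℤ) - x + 2) * ((x:ℤ) + y + 2*b + 7) ≤ 0 :=
      mul_nonpos_iff.mpr (Or.inr ⟨hp, hQ.le⟩)
    linarith [key, hP0, Int.natCast_nonneg b]
  · rw [hp] at key
    omega
  · rw [hp] at key
    omega
  · have hm := mul_le_mul_of_nonneg_right hp hQ.le
    linarith [key, hm, Int.natCast_nonneg x, Int.natCast_nonneg y, Int.natCast_nonneg b]


lemma pair03 (b x y : ℕ) (hb : b % 2 = 1) (h3 : b % 3 ≠ 2)
    (hx : x ≤ b+3) (hy : y ≤ b) (h : T2 b 0 x = T2 b 3 y) : False := by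
  rw [show T2 b 0 x = 2*(x*x) + (4*b+10)*x + (4*b*b+26*b+50) from rfl,
      show T2 b 3 y = 2*(y*y) + (4*b+22)*y + (4*b*b+28*b+66) from rfl] at h
  zify at h
  have key2 : ((y:ℤ) - x + 3) * ((x:ℤ) + y + 2*b + 8) * 2 = (5*(b:ℤ) + 16) * 2 := by
    linear_combination -h
  have key : ((y:ℤ) - x + 3) * ((x:ℤ) + y + 2*b + 8) = 5*(b:ℤ) + 16 :=
    mul_right_cancel₀ (by norm_num) key2
  have hQ : (0:ℤ) < (x:ℤ) + y + 2*b + 8 := by omega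
  rcases show (y:ℤ) - x + 3 ≤ 0 ∨ (y:ℤ) - x + 3 = 1 ∨ (y:ℤ) - x + 3 = 2 ∨ (y:ℤ) - x + 3 = 3 ∨ 4 ≤ (y:ℤ) - x + 3 by omega with hp | hp | hp | hp | hp
  · have hP0 : ((y:ℤ) - x + 3) * ((x:ℤ) + y + 2*b + 8) ≤ 0 :=
      mul_nonpos_iff.mpr (Or.inr ⟨hp, hQ.le⟩)
    linarith [key, hP0, Int.natCast_nonneg b]
  · rw [hp] at key
    omega
  · rw [hp] at key
    omega
  · rw [hp] at key
    omega
  · have hm := mul_le_mul_of_nonneg_right hp hQ.le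
    linarith [key, hm, Int.natCast_nonneg x, Int.natCast_nonneg y, Int.natCast_nonneg b]


lemma pair12 (b x y : ℕ) (hb : b % 2 = 1) (h3 : b % 3 ≠ 2)
    (hx : x ≤ b+1) (hy : y ≤ b+4) (h : T2 b 1 x = T2 b 2 y) : False := by
  rw [show T2 b 1 x = 2*(x*x) + (4*b+18)*x + (4*b*b+26*b+54) from rfl,
      show T2 b 2 y = 2*(y*y) + (4*b+6)*y + (4*b*b+28*b+50) from rfl] at h
  zify at h
  have key2 : ((x:ℤ) - y + 3) * ((x:ℤ) + y + 2*b + 6) * 2 = (7*(b:ℤ) + 16) * 2 := by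
    linear_combination h
  have key : ((x:ℤ) - y + 3) * ((x:ℤ) + y + 2*b + 6) = 7*(b:ℤ) + 16 :=
    mul_right_cancel₀ (by norm_num) key2
  have hQ : (0:ℤ) < (x:ℤ) + y + 2*b + 6 := by omega
  rcases show (x:ℤ) - y + 3 ≤ 0 ∨ (x:ℤ) - y + 3 = 1 ∨ (x:ℤ) - y + 3 = 2 ∨ (x:ℤ) - y + 3 = 3 ∨ 4 ≤ (x:ℤ) - y + 3 by omega with hp | hp | hp | hp | hp
  · have hP0 : ((x:ℤ) - y + 3) * ((x:ℤ) + y + 2*b + 6) ≤ 0 :=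
      mul_nonpos_iff.mpr (Or.inr ⟨hp, hQ.le⟩)
    linarith [key, hP0, Int.natCast_nonneg b]
  · rw [hp] at key
    omega
  · rw [hp] at key
    omega
  · rw [hp] at key
    omega
  · have hm := mul_le_mul_of_nonneg_right hp hQ.le
    linarith [key, hm, Int.natCast_nonneg x, Int.natCast_nonneg y, Int.natCast_nonneg b]


lemma pair13 (b x y : ℕ) (hb : b % 2 = 1) (h3 : b % 3 ≠ 2)
    (hx : x ≤ b+1) (hy : y ≤ b) (h : T2 b 1 x = T2 b 3 y) : False := by
  rw [show T2 b 1 x = 2*(x*x) + (4*b+18)*x + (4*b*b+26*b+54) from rfl,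
      show T2 b 3 y = 2*(y*y) + (4*b+22)*y + (4*b*b+28*b+66) from rfl] at h
  zify at h
  have key2 : ((y:ℤ) - x + 1) * ((x:ℤ) + y + 2*b + 10) * 2 = ((b:ℤ) + 4) * 2 := by
    linear_combination -h
  have key : ((y:ℤ) - x + 1) * ((x:ℤ) + y + 2*b + 10) = (b:ℤ) + 4 :=
    mul_right_cancel₀ (by norm_num) key2
  have hQ : (0:ℤ) < (x:ℤ) + y + 2*b + 10 := by omega
  rcases show (y:ℤ) - x + 1 ≤ 0 ∨ 1 ≤ (y:ℤ) - x + 1 by omega with hp | hp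
  · have hP0 : ((y:ℤ) - x + 1) * ((x:ℤ) + y + 2*b + 10) ≤ 0 :=
      mul_nonpos_iff.mpr (Or.inr ⟨hp, hQ.le⟩)
    linarith [key, hP0, Int.natCast_nonneg b]
  · have hm := mul_le_mul_of_nonneg_right hp hQ.le
    linarith [key, hm, Int.natCast_nonneg x, Int.natCast_nonneg y, Int.natCast_nonneg b]


lemma pair23 (b x y : ℕ) (hb : b % 2 = 1) (h3 : b % 3 ≠ 2)
    (hx : x ≤ b+4) (hy : y ≤ b) (h : T2 b 2 x = T2 b 3 y) : False := by
  rw [show T2 b 2 x = 2*(x*x) + (4*b+6)*x + (4*b*b+28*b+50) from rfl,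
      show T2 b 3 y = 2*(y*y) + (4*b+22)*y + (4*b*b+28*b+66) from rfl] at h
  zify at h
  have key2 : ((y:ℤ) - x + 4) * ((x:ℤ) + y + 2*b + 7) * 2 = (8*(b:ℤ) + 20) * 2 := by
    linear_combination -h
  have key : ((y:ℤ) - x + 4) * ((x:ℤ) + y + 2*b + 7) = 8*(b:ℤ) + 20 :=
    mul_right_cancel₀ (by norm_num) key2
  have hQ : (0:ℤ) < (x:ℤ) + y + 2*b + 7 := by omega
  rcases show (y:ℤ) - x + 4 ≤ 0 ∨ (y:ℤ) - x + 4 = 1 ∨ (y:ℤ) - x + 4 = 2 ∨ (y:ℤ) - x + 4 = 3 ∨ (y:ℤ) - x + 4 = 4 ∨ 5 ≤ (y:ℤ) - x + 4 by omega with hp | hp | hp | hp | hp | hp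
  · have hP0 : ((y:ℤ) - x + 4) * ((x:ℤ) + y + 2*b + 7) ≤ 0 :=
      mul_nonpos_iff.mpr (Or.inr ⟨hp, hQ.le⟩)
    linarith [key, hP0, Int.natCast_nonneg b]
  · rw [hp] at key
    omega
  · rw [hp] at key
    omega
  · rw [hp] at key
    omega
  · rw [hp] at key
    omega
  · have hm := mul_le_mul_of_nonneg_right hp hQ.le
    linarith [key, hm, Int.natCast_nonneg x, Int.natCast_nonneg y, Int.natCast_nonneg b]

lemma fin4cases : ∀ j : Fin 4, j = 0 ∨ j = 1 ∨ j = 2 ∨ j = 3 := by decide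

lemma T2_inj (b : ℕ) (hb : b % 2 = 1) (h3 : b % 3 ≠ 2) {i k : Fin 4} {x y : ℕ}
    (hx : x ≤ armLen (b+2) i) (hy : y ≤ armLen (b+2) k) (h : T2 b i x = T2 b k y) :
    i = k ∧ x = y := by
  rcases fin4cases i with rfl | rfl | rfl | rfl <;>
    rcases fin4cases k with rfl | rfl | rfl | rfl
  · exact ⟨rfl, same0 b x y h⟩
  · exact (pair01 b x y hb h3 hx hy h).elim
  · exact (pair02 b x y hb h3 hx hy h).elim
  · exact (pair03 b x y hb h3 hx hy h).elim
  · exact (pair01 b y x hb h3 hy hx h.symm).elim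
  · exact ⟨rfl, same1 b x y h⟩
  · exact (pair12 b x y hb h3 hx hy h).elim
  · exact (pair13 b x y hb h3 hx hy h).elim
  · exact (pair02 b y x hb h3 hy hx h.symm).elim
  · exact (pair12 b y x hb h3 hy hx h.symm).elim
  · exact ⟨rfl, same2 b x y h⟩
  · exact (pair23 b x y hb h3 hx hy h).elim
  · exact (pair03 b y x hb h3 hy hx h.symm).elim
  · exact (pair13 b y x hb h3 hy hx h.symm).elim
  · exact (pair23 b y x hb h3 hy hx h.symm).elim
  · exact ⟨rfl, same3 b x y h⟩

def mk (a : ℕ) (i : Fin 4) (x : ℕ) (h : x ≤ armLen a i) : ZVert a :=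
  match x, h with
  | 0, _ => Sum.inl i
  | n+1, h => Sum.inr ⟨i, ⟨n, h⟩⟩

lemma cIx_mk (a : ℕ) (i : Fin 4) (x : ℕ) (h : x ≤ armLen a i) : cIx (mk a i x h) = i := by
  cases x <;> rfl

lemma dep_mk (a : ℕ) (i : Fin 4) (x : ℕ) (h : x ≤ armLen a i) : dep (mk a i x h) = x := by
  cases x <;> rfl

end ZAux

open ZAux in
/-- For `a ≥ 2`, the graph `Z₀(a-1, a+1; a-2, a+2)` is transmission irregular
if and only if `a` is odd and `a ≢ 1 (mod 3)`. -/
theorem stmt_11 (a : ℕ) (ha : 2 ≤ a) :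
    Function.Injective (transmission (Zgraph a)) ↔ (Odd a ∧ a % 3 ≠ 1) := by
  obtain ⟨b, rfl⟩ : ∃ b, a = b + 2 := ⟨a - 2, by omega⟩
  constructor
  · intro hinj
    by_contra hcon
    push_neg at hcon
    have hcase : (b % 2 = 0) ∨ (b % 3 = 2) := by
      by_cases he : b % 2 = 0
      · exact Or.inl he
      · refine Or.inr ?_
        have ho : Odd (b+2) := by rw [Nat.odd_iff]; omega
        have := hcon ho
        omega
    rcases hcase with he | he
    · obtain ⟨s, rfl⟩ : ∃ s, b = 2*s := ⟨b/2, by omega⟩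
      have hxv : s ≤ armLen (2*s+2) 0 := by rw [armLen0]; omega
      have hxu : s ≤ armLen (2*s+2) 2 := by rw [armLen2]; omega
      set v := mk (2*s+2) 0 s hxv with hv
      set u := mk (2*s+2) 2 s hxu with hu
      have h1 := two_transmission (2*s) v
      have h2 := two_transmission (2*s) u
      rw [cIx_mk, dep_mk] at h1 h2
      have hT : T2 (2*s) 0 s = T2 (2*s) 2 s := by
        rw [show T2 (2*s) 0 s = 2*(s*s) + (4*(2*s)+10)*s + (4*(2*s)*(2*s)+26*(2*s)+50) from rfl,
            show T2 (2*s) 2 s = 2*(s*s) + (4*(2*s)+6)*s + (4*(2*s)*(2*s)+28*(2*s)+50) from rfl]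
        ring
      have heq : transmission (Zgraph (2*s+2)) v = transmission (Zgraph (2*s+2)) u := by
        omega
      have := hinj heq
      have hc : cIx v = cIx u := by rw [this]
      rw [cIx_mk, cIx_mk] at hc
      exact absurd hc (by decide)
    · obtain ⟨t, rfl⟩ : ∃ t, b = 3*t+2 := ⟨b/3, by omega⟩
      have hxv : t+1 ≤ armLen (3*t+2+2) 2 := by rw [armLen2]; omega
      have hxu : t ≤ armLen (3*t+2+2) 3 := by rw [armLen3]; omega
      set v := mk (3*t+2+2) 2 (t+1) hxv with hv
      set u := mk (3*t+2+2) 3 t hxu with hu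
      have h1 := two_transmission (3*t+2) v
      have h2 := two_transmission (3*t+2) u
      rw [cIx_mk, dep_mk] at h1 h2
      have hT : T2 (3*t+2) 2 (t+1) = T2 (3*t+2) 3 t := by
        rw [show T2 (3*t+2) 2 (t+1) = 2*((t+1)*(t+1)) + (4*(3*t+2)+6)*(t+1) +
              (4*(3*t+2)*(3*t+2)+28*(3*t+2)+50) from rfl,
            show T2 (3*t+2) 3 t = 2*(t*t) + (4*(3*t+2)+22)*t +
              (4*(3*t+2)*(3*t+2)+28*(3*t+2)+66) from rfl]
        ring
      have heq : transmission (Zgraph (3*t+2+2)) v = transmission (Zgraph (3*t+2+2)) u := by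
        omega
      have := hinj heq
      have hc : cIx v = cIx u := by rw [this]
      rw [cIx_mk, cIx_mk] at hc
      exact absurd hc (by decide)
  · rintro ⟨hodd, h3⟩
    have hb : b % 2 = 1 := by rw [Nat.odd_iff] at hodd; omega
    have hb3 : b % 3 ≠ 2 := by omega
    intro v u h
    have h1 := two_transmission b v
    have h2 := two_transmission b u
    have hT : T2 b (cIx v) (dep v) = T2 b (cIx u) (dep u) := by rw [← h1, ← h2, h]
    obtain ⟨hc, hd⟩ := T2_inj b hb hb3 (dep_le v) (dep_le u) hT
    exact vert_ext hc hd
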